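/- Let (X,μ) be an arbitrary measure space, φ : ℝⁿ → ℝ a sublinear function (positively homogeneous and subadditive), and f ∈ L¹(X,ℝⁿ) with φ∘f integrable. Then φ(∫_X f dμ) ≤ ∫_X φ(f(x)) dμ(x). -/

import Mathlib

open MeasureTheory

theorem roselli_willem
    {n : ℕ} {X : Type*} [MeasurableSpace X] (μ : Measure X)
    (φ : (Fin n → ℝ) → ℝ)
    (hhom : ∀ l : ℝ, 0 ≤ l → ∀ x, φ (l • x) = l * φ x)
    (hsub : ∀ x y, φ (x + y) ≤ φ x + φ y)
    (f : X → Fin n → ℝ) (hf : Integrable f μ)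
    (hφf : Integrable (fun x => φ (f x)) μ) :
    φ (∫ x, f x ∂μ) ≤ ∫ x, φ (f x) ∂μ := by
  have hφ0 : φ 0 = 0 := by simpa using hhom 0 le_rfl 0
  set v : Fin n → ℝ := ∫ x, f x ∂μ with hv
  -- c * φ x ≤ φ (c • x) for all c
  have hkey : ∀ (c : ℝ) (x : Fin n → ℝ), c * φ x ≤ φ (c • x) := by
    intro c x
    rcases le_or_gt 0 c with hc | hc
    · rw [hhom c hc]
    · have h1 : φ 0 ≤ φ (c • x) + φ ((-c) • x) := by
        have := hsub (c • x) ((-c) • x)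
        have h2 : c • x + (-c) • x = 0 := by
          rw [← add_smul]; simp
        rwa [h2] at this
      rw [hφ0, hhom (-c) (by linarith)] at h1
      nlinarith
  -- Hahn-Banach: get linear g ≤ φ with g v = φ v
  obtain ⟨g, hgv, hg⟩ : ∃ g : (Fin n → ℝ) →ₗ[ℝ] ℝ, g v = φ v ∧ ∀ x, g x ≤ φ x := by
    have H : ∀ c : ℝ, c • v = 0 → c • (φ v) = 0 := by
      intro c hc
      by_cases h0 : v = 0
      · simp [h0, hφ0]
      · have : c = 0 := by
          by_contra hc0
          exact h0 (by simpa [hc0] using congrArg (fun w => c⁻¹ • w) hc)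
        simp [this]
    set F := LinearPMap.mkSpanSingleton' (σ := RingHom.id ℝ) v (φ v) H with hF
    have hdom : F.domain = Submodule.span ℝ {v} :=
      LinearPMap.domain_mkSpanSingleton (σ := RingHom.id ℝ) v (φ v) H
    have hbound : ∀ x : F.domain, F x ≤ φ x := by
      rintro ⟨x, hx⟩
      have hx' : x ∈ Submodule.span ℝ {v} := hdom ▸ hx
      obtain ⟨c, rfl⟩ := Submodule.mem_span_singleton.mp hx'
      have happ := LinearPMap.mkSpanSingleton'_apply (σ := RingHom.id ℝ) v (φ v) H c hx
      calc F ⟨c • v, hx⟩ = c • φ v := happ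
        _ = c * φ v := by simp [smul_eq_mul]
        _ ≤ φ (c • v) := hkey c v
    obtain ⟨g, hext, hle⟩ := exists_extension_of_le_sublinear F φ
      (fun c hc x => hhom c hc.le x) hsub hbound
    refine ⟨g, ?_, hle⟩
    have hvmem : v ∈ F.domain := by rw [hdom]; exact Submodule.mem_span_singleton_self v
    have := hext ⟨v, hvmem⟩
    rw [this, LinearPMap.mkSpanSingleton'_apply_self]
  -- g is continuous (finite dimensions)
  set G : (Fin n → ℝ) →L[ℝ] ℝ := LinearMap.toContinuousLinearMap g with hG
  have hGeq : ∀ x, G x = g x := fun x => rfl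
  have hGf : Integrable (fun x => G (f x)) μ := G.integrable_comp hf
  calc φ v = G v := by rw [hGeq, hgv]
    _ = ∫ x, G (f x) ∂μ := (G.integral_comp_comm hf).symm
    _ ≤ ∫ x, φ (f x) ∂μ := integral_mono hGf hφf fun x => hg (f x)
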